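/- Let C be a category with pullbacks and let F : C ⥤ C be an endofunctor that sends pullback squares to weak pullback squares. Then for any F-coalgebras (A,α), (B,β), (C',γ) and any coalgebra morphisms φ : (A,α) ⟶ (C',γ) and ψ : (B,β) ⟶ (C',γ), there exist an F-coalgebra (P,χ) and coalgebra morphisms μ : (P,χ) ⟶ (A,α) and ν : (P,χ) ⟶ (B,β) with φ ∘ μ = ψ ∘ ν, such that the underlying commuting square in C (with sides the underlying morphisms of μ, ν, φ, ψ) is a pullback square. -/
import Mathlib


open CategoryTheory CategoryTheory.Limits

universe v u

/-- A commuting square `fst ≫ f = snd ≫ g` is a *weak pullback* if every other commuting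
square over the cospan `f, g` factors (not necessarily uniquely) through it. -/
def IsWeakPullback {C : Type u} [Category.{v} C] {W X Y Z : C}
    (fst : W ⟶ X) (snd : W ⟶ Y) (f : X ⟶ Z) (g : Y ⟶ Z) : Prop :=
  fst ≫ f = snd ≫ g ∧
    ∀ {T : C} (h : T ⟶ X) (k : T ⟶ Y), h ≫ f = k ≫ g →
      ∃ l : T ⟶ W, l ≫ fst = h ∧ l ≫ snd = k

theorem coalgebra_weak_pullback
    {C : Type u} [Category.{v} C] [HasPullbacks C] (F : C ⥤ C)
    (hF : ∀ {W X Y Z : C} (fst : W ⟶ X) (snd : W ⟶ Y) (f : X ⟶ Z) (g : Y ⟶ Z),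
      IsPullback fst snd f g → IsWeakPullback (F.map fst) (F.map snd) (F.map f) (F.map g))
    (Aα Bβ Cγ : Endofunctor.Coalgebra F) (φ : Aα ⟶ Cγ) (ψ : Bβ ⟶ Cγ) :
    ∃ (Pχ : Endofunctor.Coalgebra F) (μ : Pχ ⟶ Aα) (ν : Pχ ⟶ Bβ),
      μ ≫ φ = ν ≫ ψ ∧ IsPullback μ.f ν.f φ.f ψ.f := by
  let P := pullback φ.f ψ.f
  have hpb : IsPullback (pullback.fst φ.f ψ.f) (pullback.snd φ.f ψ.f) φ.f ψ.f :=
    IsPullback.of_hasPullback φ.f ψ.f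
  obtain ⟨hcomm, hweak⟩ := hF _ _ _ _ hpb
  have hsq : (pullback.fst φ.f ψ.f ≫ Aα.str) ≫ F.map φ.f
      = (pullback.snd φ.f ψ.f ≫ Bβ.str) ≫ F.map ψ.f := by
    rw [Category.assoc, Category.assoc, φ.h, ψ.h, ← Category.assoc, ← Category.assoc,
      pullback.condition]
  obtain ⟨χ, hχ1, hχ2⟩ := hweak _ _ hsq
  exact ⟨⟨P, χ⟩, ⟨pullback.fst φ.f ψ.f, hχ1⟩, ⟨pullback.snd φ.f ψ.f, hχ2⟩,
    Endofunctor.Coalgebra.Hom.ext pullback.condition, hpb⟩
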